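/- Let γ(t) = (p + u·t, q + v·t, r + p·v·t + u·v·t²/2 + w·t) be a Nil translation curve with (u,v) ≠ (0,0), and let 0 < t₁ < t₂. Then the Euclidean simple ratio of the fibre projections satisfies dist(π(γ(0)), π(γ(t₁))) / dist(π(γ(t₁)), π(γ(t₂))) = t₁/(t₂ − t₁); i.e., it equals the Nil simple ratio of the points γ(0), γ(t₁), γ(t₂) (the ratio of their translation distances along the curve). Moreover, if (u,v) = (0,0) (a fibre-like curve), then the Euclidean distance between γ(t₁) and γ(t₂) equals |w|·|t₂ − t₁|, the translation arc length between them. -/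
import Mathlib


/-- The Nil translation curve starting at `P = (p,q,r)` with direction `(u,v,w)`. -/
noncomputable def nilCurve (P d : ℝ × ℝ × ℝ) : ℝ → ℝ × ℝ × ℝ :=
  fun t =>
    (P.1 + d.1 * t,
     P.2.1 + d.2.1 * t,
     P.2.2 + P.1 * d.2.1 * t + d.1 * d.2.1 * t ^ 2 / 2 + d.2.2 * t)

/-- The fibre projection `π(a,b,c) = (a,b)`. -/
def fibreProj : ℝ × ℝ × ℝ → ℝ × ℝ := fun q => (q.1, q.2.1)

/-- Euclidean distance in the plane ℝ². -/
noncomputable def euclDist2 (a b : ℝ × ℝ) : ℝ :=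
  Real.sqrt ((a.1 - b.1) ^ 2 + (a.2 - b.2) ^ 2)

/-- Euclidean distance in ℝ³. -/
noncomputable def euclDist3 (a b : ℝ × ℝ × ℝ) : ℝ :=
  Real.sqrt ((a.1 - b.1) ^ 2 + (a.2.1 - b.2.1) ^ 2 + (a.2.2 - b.2.2) ^ 2)

/-- On a non-fibre-like Nil translation curve, the Euclidean simple ratio of the
fibre projections of `γ(0), γ(t₁), γ(t₂)` equals `t₁/(t₂−t₁)`, the Nil simple
ratio of the three points. For a fibre-like curve, the Euclidean distance between
`γ(t₁)` and `γ(t₂)` equals the translation arc length `|w|·|t₂−t₁|`. -/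
theorem nil_simple_ratio_via_fibre_projection
    (p q r u v w t₁ t₂ : ℝ) (ht₁ : 0 < t₁) (ht₂ : t₁ < t₂) :
    ((u, v) ≠ ((0 : ℝ), (0 : ℝ)) →
      euclDist2 (fibreProj (nilCurve (p, q, r) (u, v, w) 0))
          (fibreProj (nilCurve (p, q, r) (u, v, w) t₁)) /
        euclDist2 (fibreProj (nilCurve (p, q, r) (u, v, w) t₁))
          (fibreProj (nilCurve (p, q, r) (u, v, w) t₂)) = t₁ / (t₂ - t₁)) ∧
    ((u, v) = ((0 : ℝ), (0 : ℝ)) →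
      euclDist3 (nilCurve (p, q, r) (u, v, w) t₁) (nilCurve (p, q, r) (u, v, w) t₂) =
        |w| * |t₂ - t₁|) := by
  constructor
  · intro huv
    have hs : 0 < u ^ 2 + v ^ 2 := by
      have : u ≠ 0 ∨ v ≠ 0 := by
        by_contra hc
        push_neg at hc
        exact huv (by simp [hc.1, hc.2])
      rcases this with h | h
      · positivity
      · positivity
    have hsq : Real.sqrt (u ^ 2 + v ^ 2) > 0 := Real.sqrt_pos.mpr hs
    have key : ∀ a b : ℝ, euclDist2 (fibreProj (nilCurve (p, q, r) (u, v, w) a))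
        (fibreProj (nilCurve (p, q, r) (u, v, w) b)) =
        Real.sqrt (u ^ 2 + v ^ 2) * |a - b| := by
      intro a b
      simp only [euclDist2, fibreProj, nilCurve]
      have : (p + u * a - (p + u * b)) ^ 2 + (q + v * a - (q + v * b)) ^ 2 =
          (u ^ 2 + v ^ 2) * (a - b) ^ 2 := by ring
      rw [this, Real.sqrt_mul hs.le, Real.sqrt_sq_eq_abs]
    rw [key, key]
    rw [mul_div_mul_left _ _ hsq.ne']
    rw [abs_of_nonpos (by linarith), abs_of_nonpos (by linarith)]
    rw [neg_div_neg_eq]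
    have h : t₁ - t₂ ≠ 0 := by linarith
    have h2 : t₂ - t₁ ≠ 0 := by linarith
    field_simp
    ring
  · intro huv
    have hu : u = 0 := (Prod.mk.injEq u v 0 0 ▸ huv).1
    have hv : v = 0 := (Prod.mk.injEq u v 0 0 ▸ huv).2
    simp only [euclDist3, nilCurve, hu, hv]
    have : (p + 0 * t₁ - (p + 0 * t₂)) ^ 2 + (q + 0 * t₁ - (q + 0 * t₂)) ^ 2 +
        (r + p * 0 * t₁ + 0 * 0 * t₁ ^ 2 / 2 + w * t₁ -
          (r + p * 0 * t₂ + 0 * 0 * t₂ ^ 2 / 2 + w * t₂)) ^ 2 =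
        (w * (t₁ - t₂)) ^ 2 := by ring
    rw [this, Real.sqrt_sq_eq_abs, abs_mul, abs_sub_comm]
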